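/- Assume 1 − AC > 0 and let E* = ((1−AC)/(1+A), (1+C)/(1+A)). The Jacobian matrix J(E*) of the system at E* equals [[(1+C)(−1+AC)/(1+A)², A(1+C)(−1+AC)/(1+A)²], [B(1+C)/(1+A), −B(1+C)/(1+A)]]; its determinant is det J(E*) = B(1+C)²(1−AC)/(1+A)² > 0 and its trace is trace J(E*) = (1+C)(−1−(1+A)B+AC)/(1+A)² < 0. Consequently both eigenvalues of J(E*) have strictly negative real part, so E* is a locally asymptotically stable (attracting) equilibrium. -/
import Mathlib


/-- For `1 − AC > 0`, at the coexistence equilibrium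
`E* = ((1−AC)/(1+A), (1+C)/(1+A))` the Jacobian matrix equals
`[[(1+C)(−1+AC)/(1+A)², A(1+C)(−1+AC)/(1+A)²], [B(1+C)/(1+A), −B(1+C)/(1+A)]]`,
with determinant `B(1+C)²(1−AC)/(1+A)² > 0` and trace
`(1+C)(−1−(1+A)B+AC)/(1+A)² < 0`; hence every (complex) eigenvalue has
strictly negative real part and `E*` is locally asymptotically stable. -/
theorem stmt_13 (A B C : ℝ) (hA : 0 < A) (hB : 0 < B) (hC : 0 < C)
    (hAC : 0 < 1 - A * C)
    (J : ℝ → ℝ → Matrix (Fin 2) (Fin 2) ℝ)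
    (hJ : ∀ x y : ℝ, J x y =
      !![x * (2 - 3 * x - 2 * A * y) - C * (-1 + 2 * x + A * y), -A * x * (C + x);
         B * y, B * (C + x - 2 * y)]) :
    J ((1 - A * C) / (1 + A)) ((1 + C) / (1 + A)) =
      !![(1 + C) * (-1 + A * C) / (1 + A) ^ 2, A * (1 + C) * (-1 + A * C) / (1 + A) ^ 2;
         B * (1 + C) / (1 + A), -(B * (1 + C) / (1 + A))] ∧
    (J ((1 - A * C) / (1 + A)) ((1 + C) / (1 + A))).det =
      B * (1 + C) ^ 2 * (1 - A * C) / (1 + A) ^ 2 ∧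
    0 < B * (1 + C) ^ 2 * (1 - A * C) / (1 + A) ^ 2 ∧
    (J ((1 - A * C) / (1 + A)) ((1 + C) / (1 + A))).trace =
      (1 + C) * (-1 - (1 + A) * B + A * C) / (1 + A) ^ 2 ∧
    (1 + C) * (-1 - (1 + A) * B + A * C) / (1 + A) ^ 2 < 0 ∧
    (∀ z : ℂ,
      ((J ((1 - A * C) / (1 + A)) ((1 + C) / (1 + A))).charpoly.map
        (algebraMap ℝ ℂ)).IsRoot z → z.re < 0) := by
  have hA1 : (0:ℝ) < 1 + A := by linarith
  have hA1' : (1:ℝ) + A ≠ 0 := ne_of_gt hA1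
  have hM : J ((1 - A * C) / (1 + A)) ((1 + C) / (1 + A)) =
      !![(1 + C) * (-1 + A * C) / (1 + A) ^ 2, A * (1 + C) * (-1 + A * C) / (1 + A) ^ 2;
         B * (1 + C) / (1 + A), -(B * (1 + C) / (1 + A))] := by
    rw [hJ]
    ext i j
    fin_cases i <;> fin_cases j <;>
      simp [Matrix.cons_val_zero, Matrix.cons_val_one] <;> field_simp <;> ring
  have hdet : (J ((1 - A * C) / (1 + A)) ((1 + C) / (1 + A))).det =
      B * (1 + C) ^ 2 * (1 - A * C) / (1 + A) ^ 2 := by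
    rw [hM, Matrix.det_fin_two_of]
    field_simp
    ring
  have htr : (J ((1 - A * C) / (1 + A)) ((1 + C) / (1 + A))).trace =
      (1 + C) * (-1 - (1 + A) * B + A * C) / (1 + A) ^ 2 := by
    rw [hM, Matrix.trace_fin_two_of]
    field_simp
    ring
  have hdetpos : 0 < B * (1 + C) ^ 2 * (1 - A * C) / (1 + A) ^ 2 := by positivity
  have htrneg : (1 + C) * (-1 - (1 + A) * B + A * C) / (1 + A) ^ 2 < 0 := by
    apply div_neg_of_neg_of_pos
    · apply mul_neg_of_pos_of_neg
      · linarith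
      · nlinarith
    · positivity
  refine ⟨hM, hdet, hdetpos, htr, htrneg, ?_⟩
  intro z hz
  set t : ℝ := (1 + C) * (-1 - (1 + A) * B + A * C) / (1 + A) ^ 2 with ht
  set d : ℝ := B * (1 + C) ^ 2 * (1 - A * C) / (1 + A) ^ 2 with hd
  set a : ℝ := (1 + C) * (-1 + A * C) / (1 + A) ^ 2 with hae
  set b : ℝ := A * (1 + C) * (-1 + A * C) / (1 + A) ^ 2 with hbe
  set c : ℝ := B * (1 + C) / (1 + A) with hce
  set e : ℝ := -(B * (1 + C) / (1 + A)) with hee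
  have hta : t = a + e := by rw [ht, hae, hee]; field_simp; ring
  have hda : d = a * e - b * c := by rw [hd, hae, hee, hbe, hce]; field_simp; ring
  have hcp : (J ((1 - A * C) / (1 + A)) ((1 + C) / (1 + A))).charpoly =
      Polynomial.X ^ 2 - Polynomial.C t * Polynomial.X + Polynomial.C d := by
    rw [hM, Matrix.charpoly, Matrix.det_fin_two, hta, hda]
    rw [Matrix.charmatrix_apply_eq, Matrix.charmatrix_apply_eq,
      Matrix.charmatrix_apply_ne _ _ _ (by decide), Matrix.charmatrix_apply_ne _ _ _ (by decide)]
    simp only [Matrix.cons_val', Matrix.cons_val_zero, Matrix.cons_val_one, Matrix.head_cons,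
      Matrix.empty_val', Matrix.cons_val_fin_one, Matrix.head_fin_const, Matrix.of_apply,
      Polynomial.C_add, Polynomial.C_sub, Polynomial.C_mul, Polynomial.C_neg]
    ring
  rw [hcp] at hz
  have hz' : z ^ 2 - (t : ℂ) * z + (d : ℂ) = 0 := by
    simpa [Polynomial.IsRoot, Polynomial.eval_map, Complex.coe_algebraMap] using hz
  have hre := congrArg Complex.re hz'
  have him := congrArg Complex.im hz'
  simp [Complex.add_re, Complex.sub_re, Complex.mul_re, Complex.mul_im, pow_two,
    Complex.add_im, Complex.sub_im, Complex.ofReal_re, Complex.ofReal_im] at hre him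
  clear hJ hM hcp hz hz' hdet htr hta hda
  clear_value t d a b c e
  clear ht hd hae hbe hce hee a b c e
  rcases eq_or_ne z.im 0 with h0 | h0
  · by_contra hcon
    push_neg at hcon
    nlinarith [hre, h0, htrneg, hdetpos, sq_nonneg z.re]
  · have h2 : 2 * z.re = t := by
      rcases mul_eq_zero.mp (by linear_combination him : z.im * (2 * z.re - t) = 0) with h | h
      · exact absurd h h0
      · linarith
    linarith
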